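/- Let a be a complex number with |a| = 1 and a ≠ −1, and let κ be a complex number with Re κ > 0 and i(a−1) + κ(a+1) ≠ 0. Define G^a_κ(x,y) = (i(a−1)·sinh(κ·min(x,y)) + κ(a+1)·cosh(κ·min(x,y)))·e^{−κ·max(x,y)}/(κ·(i(a−1)+κ(a+1))) for x, y ≥ 0. Then for every continuous function f : [0,∞) → ℂ with compact support, the function ψ(x) = ∫₀^∞ G^a_κ(x,y)·f(y) dy is continuously differentiable on [0,∞), satisfies the boundary condition (a−1)·ψ(0) + i(a+1)·ψ′(0) = 0, and satisfies −ψ″(x) + κ²·ψ(x) = f(x) at every point x > 0 at which f is continuous. -/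

import Mathlib

open Complex Set MeasureTheory intervalIntegral

noncomputable def uuA (a κ : ℂ) (t : ℝ) : ℂ :=
  Complex.I * (a - 1) * Complex.sinh (κ * t) + κ * (a + 1) * Complex.cosh (κ * t)

noncomputable def uuA' (a κ : ℂ) (t : ℝ) : ℂ :=
  κ * (Complex.I * (a - 1) * Complex.cosh (κ * t) + κ * (a + 1) * Complex.sinh (κ * t))

noncomputable def vvA (κ : ℂ) (t : ℝ) : ℂ := Complex.exp (-(κ * t))

lemma hasDerivAt_kmul (κ : ℂ) (t : ℝ) : HasDerivAt (fun s : ℝ => κ * (s : ℂ)) κ t := by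
  simpa using (Complex.ofRealCLM.hasDerivAt (x := t)).const_mul κ

lemma hasDerivAt_sinh_k (κ : ℂ) (t : ℝ) :
    HasDerivAt (fun s : ℝ => Complex.sinh (κ * s)) (κ * Complex.cosh (κ * t)) t := by
  exact ((Complex.hasDerivAt_sinh (κ * t)).comp t (hasDerivAt_kmul κ t)).congr_deriv (mul_comm _ _)

lemma hasDerivAt_cosh_k (κ : ℂ) (t : ℝ) :
    HasDerivAt (fun s : ℝ => Complex.cosh (κ * s)) (κ * Complex.sinh (κ * t)) t := by
  exact ((Complex.hasDerivAt_cosh (κ * t)).comp t (hasDerivAt_kmul κ t)).congr_deriv (mul_comm _ _)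

lemma hasDerivAt_uuA (a κ : ℂ) (t : ℝ) : HasDerivAt (uuA a κ) (uuA' a κ t) t := by
  have h := ((hasDerivAt_sinh_k κ t).const_mul (Complex.I * (a - 1))).add
    ((hasDerivAt_cosh_k κ t).const_mul (κ * (a + 1)))
  unfold uuA uuA'
  exact h.congr_deriv (by ring)

lemma hasDerivAt_uuA' (a κ : ℂ) (t : ℝ) : HasDerivAt (uuA' a κ) (κ ^ 2 * uuA a κ t) t := by
  have h := (((hasDerivAt_cosh_k κ t).const_mul (Complex.I * (a - 1))).add
    ((hasDerivAt_sinh_k κ t).const_mul (κ * (a + 1)))).const_mul κ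
  unfold uuA uuA'
  exact h.congr_deriv (by ring)

lemma hasDerivAt_vvA (κ : ℂ) (t : ℝ) : HasDerivAt (vvA κ) (-κ * vvA κ t) t := by
  have h := ((hasDerivAt_kmul κ t).neg).cexp
  unfold vvA
  exact h.congr_deriv (by simp only [Pi.neg_apply]; ring)

lemma hasDerivAt_vvA' (κ : ℂ) (t : ℝ) :
    HasDerivAt (fun s => -κ * vvA κ s) (κ ^ 2 * vvA κ t) t := by
  have h := (hasDerivAt_vvA κ t).const_mul (-κ)
  exact h.congr_deriv (by ring)

lemma continuous_uuA (a κ : ℂ) : Continuous (uuA a κ) := by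
  unfold uuA; fun_prop

lemma continuous_uuA' (a κ : ℂ) : Continuous (uuA' a κ) := by
  unfold uuA'; fun_prop

lemma continuous_vvA (κ : ℂ) : Continuous (vvA κ) := by
  unfold vvA; fun_prop

lemma wronskian_eq (a κ : ℂ) (x : ℝ) :
    -κ * vvA κ x * uuA a κ x - uuA' a κ x * vvA κ x
      = -(κ * (Complex.I * (a - 1) + κ * (a + 1))) := by
  unfold uuA uuA' vvA
  have h : Complex.exp (-(κ * x)) * (Complex.cosh (κ * x) + Complex.sinh (κ * x)) = 1 := by
    rw [Complex.cosh_add_sinh, ← Complex.exp_add]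
    simp
  linear_combination (-(κ * Complex.I * (a - 1)) - κ ^ 2 * (a + 1)) * h

/-- Green function of `-d²/dx² + κ²` on the half-line with boundary condition
`(a-1)ψ(0) + i(a+1)ψ'(0) = 0` at the origin. -/
noncomputable def greenA (a κ : ℂ) (x y : ℝ) : ℂ :=
  (Complex.I * (a - 1) * Complex.sinh (κ * (min x y : ℝ))
      + κ * (a + 1) * Complex.cosh (κ * (min x y : ℝ)))
    * Complex.exp (-κ * (max x y : ℝ))
    / (κ * (Complex.I * (a - 1) + κ * (a + 1)))

theorem stmt_12 (a κ : ℂ) (ha : ‖a‖ = 1) (ha' : a ≠ -1)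
    (hκ : 0 < κ.re) (hden : Complex.I * (a - 1) + κ * (a + 1) ≠ 0)
    (f : ℝ → ℂ) (hf : ContinuousOn f (Ici 0)) (hfc : HasCompactSupport f)
    (ψ : ℝ → ℂ) (hψ : ∀ x : ℝ, ψ x = ∫ y in Ioi (0 : ℝ), greenA a κ x y * f y) :
    ∃ ψ' : ℝ → ℂ,
      (∀ x ∈ Ici (0 : ℝ), HasDerivWithinAt ψ (ψ' x) (Ici 0) x)
      ∧ ContinuousOn ψ' (Ici 0)
      ∧ (a - 1) * ψ 0 + Complex.I * (a + 1) * ψ' 0 = 0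
      ∧ ∀ x : ℝ, 0 < x → ContinuousAt f x →
          HasDerivAt ψ' (κ ^ 2 * ψ x - f x) x := by
  have hκ0 : κ ≠ 0 := by
    intro h; rw [h] at hκ; simp at hκ
  set W : ℂ := κ * (Complex.I * (a - 1) + κ * (a + 1)) with hW_def
  have hW : W ≠ 0 := mul_ne_zero hκ0 hden
  obtain ⟨R, hR⟩ : ∃ R : ℝ, ∀ y : ℝ, R ≤ y → f y = 0 := by
    obtain ⟨R, hR⟩ := hfc.isBounded.subset_closedBall 0
    refine ⟨R + 1, fun y hy => image_eq_zero_of_notMem_tsupport fun hmem => ?_⟩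
    have h2 := hR hmem
    simp only [Metric.mem_closedBall, Real.dist_eq, sub_zero] at h2
    have : y ≤ R := le_trans (le_abs_self y) h2
    linarith
  have hcont_uf : ContinuousOn (fun y => uuA a κ y * f y) (Ici 0) :=
    ((continuous_uuA a κ).continuousOn).mul hf
  have hcont_vf : ContinuousOn (fun y => vvA κ y * f y) (Ici 0) :=
    ((continuous_vvA κ).continuousOn).mul hf
  have hIoc : ∀ w : ℝ → ℂ, ContinuousOn (fun y => w y * f y) (Ici 0) →
      ∀ x1 x2 : ℝ, 0 ≤ x1 → IntegrableOn (fun y => w y * f y) (Ioc x1 x2) := by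
    intro w hw x1 x2 h1
    have hsub : Icc x1 x2 ⊆ Ici 0 := fun y hy => le_trans h1 hy.1
    exact ((hw.mono hsub).integrableOn_Icc).mono_set Ioc_subset_Icc_self
  have hIoi : ∀ w : ℝ → ℂ, ContinuousOn (fun y => w y * f y) (Ici 0) →
      ∀ x : ℝ, 0 ≤ x → IntegrableOn (fun y => w y * f y) (Ioi x) := by
    intro w hw x hx
    rw [← Ioc_union_Ioi_eq_Ioi (le_max_right R x)]
    refine (hIoc w hw x (max R x) hx).union ?_
    have heq : EqOn (fun y => w y * f y) 0 (Ioi (max R x)) := by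
      intro y hy
      have : f y = 0 := hR y (le_of_lt (lt_of_le_of_lt (le_max_left R x) hy))
      simp [this]
    rw [integrableOn_congr_fun heq measurableSet_Ioi]
    exact integrableOn_zero
  have hsplit : ∀ w : ℝ → ℂ, ContinuousOn (fun y => w y * f y) (Ici 0) →
      ∀ x : ℝ, 0 ≤ x →
      (∫ y in Ioi (0 : ℝ), w y * f y)
        = (∫ y in Ioc 0 x, w y * f y) + ∫ y in Ioi x, w y * f y := by
    intro w hw x hx
    rw [← Ioc_union_Ioi_eq_Ioi hx, setIntegral_union (Ioc_disjoint_Ioi le_rfl)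
      measurableSet_Ioi (hIoc w hw 0 x le_rfl) (hIoi w hw x hx)]
  have hii : ∀ w : ℝ → ℂ, ContinuousOn (fun y => w y * f y) (Ici 0) →
      ∀ x : ℝ, 0 ≤ x → IntervalIntegrable (fun y => w y * f y) volume 0 x := by
    intro w hw x hx
    rw [intervalIntegrable_iff_integrableOn_Ioc_of_le hx]
    exact hIoc w hw 0 x le_rfl
  set A : ℝ → ℂ := fun x => ∫ t in (0:ℝ)..x, uuA a κ t * f t with hA_def
  set D : ℝ → ℂ := fun x => ∫ t in (0:ℝ)..x, vvA κ t * f t with hD_def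
  set C : ℂ := ∫ y in Ioi (0:ℝ), vvA κ y * f y with hC_def
  have hψφ : ∀ x : ℝ, 0 ≤ x →
      ψ x = (vvA κ x * A x + uuA a κ x * (C - D x)) / W := by
    intro x hx
    have hBint : (∫ y in Ioi x, vvA κ y * f y) = C - D x := by
      have hs := hsplit (vvA κ) hcont_vf x hx
      have hD' : D x = ∫ y in Ioc 0 x, vvA κ y * f y := by
        rw [hD_def]; exact intervalIntegral.integral_of_le hx
      rw [hC_def, hs, hD']; ring
    have e1 : EqOn (fun y => greenA a κ x y * f y)
        (fun y => (vvA κ x / W) * (uuA a κ y * f y)) (Ioc 0 x) := by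
      intro y hy
      have h1 : min x y = y := min_eq_right hy.2
      have h2 : max x y = x := max_eq_left hy.2
      simp only [greenA, h1, h2, uuA, vvA, ← hW_def, neg_mul]
      ring
    have e2 : EqOn (fun y => greenA a κ x y * f y)
        (fun y => (uuA a κ x / W) * (vvA κ y * f y)) (Ioi x) := by
      intro y hy
      have h1 : min x y = x := min_eq_left (le_of_lt hy)
      have h2 : max x y = y := max_eq_right (le_of_lt hy)
      simp only [greenA, h1, h2, uuA, vvA, ← hW_def, neg_mul]
      ring
    have i1 : IntegrableOn (fun y => greenA a κ x y * f y) (Ioc 0 x) := by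
      rw [integrableOn_congr_fun e1 measurableSet_Ioc]
      exact (hIoc _ hcont_uf 0 x le_rfl).const_mul _
    have i2 : IntegrableOn (fun y => greenA a κ x y * f y) (Ioi x) := by
      rw [integrableOn_congr_fun e2 measurableSet_Ioi]
      exact (hIoi _ hcont_vf x hx).const_mul _
    have s1 : (∫ y in Ioc 0 x, greenA a κ x y * f y) = (vvA κ x / W) * A x := by
      rw [setIntegral_congr_fun measurableSet_Ioc e1, MeasureTheory.integral_const_mul]
      congr 1
      rw [hA_def]
      exact (intervalIntegral.integral_of_le hx).symm
    have s2 : (∫ y in Ioi x, greenA a κ x y * f y) = (uuA a κ x / W) * (C - D x) := by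
      rw [setIntegral_congr_fun measurableSet_Ioi e2, MeasureTheory.integral_const_mul, hBint]
    rw [hψ x, ← Ioc_union_Ioi_eq_Ioi hx, setIntegral_union (Ioc_disjoint_Ioi le_rfl)
      measurableSet_Ioi i1 i2, s1, s2]
    ring
  have hfA : ∀ x ∈ Ici (0:ℝ), HasDerivWithinAt A (uuA a κ x * f x) (Ici 0) x := by
    intro x hx
    rcases eq_or_lt_of_le (show (0:ℝ) ≤ x from hx) with h0 | h0
    · have h := integral_hasDerivWithinAt_right (f := fun y => uuA a κ y * f y)
        (s := Ici 0) (t := Ioi 0) (hii _ hcont_uf 0 le_rfl)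
        ⟨Ioi 0, self_mem_nhdsWithin,
          (hcont_uf.mono Ioi_subset_Ici_self).aestronglyMeasurable measurableSet_Ioi⟩
        ((hcont_uf 0 self_mem_Ici).mono Ioi_subset_Ici_self)
      rw [← h0]
      exact h
    · exact (integral_hasDerivAt_right (hii _ hcont_uf x hx)
        ⟨Ici 0, Ici_mem_nhds h0, hcont_uf.aestronglyMeasurable measurableSet_Ici⟩
        ((hcont_uf x hx).continuousAt (Ici_mem_nhds h0))).hasDerivWithinAt
  have hfD : ∀ x ∈ Ici (0:ℝ), HasDerivWithinAt D (vvA κ x * f x) (Ici 0) x := by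
    intro x hx
    rcases eq_or_lt_of_le (show (0:ℝ) ≤ x from hx) with h0 | h0
    · have h := integral_hasDerivWithinAt_right (f := fun y => vvA κ y * f y)
        (s := Ici 0) (t := Ioi 0) (hii _ hcont_vf 0 le_rfl)
        ⟨Ioi 0, self_mem_nhdsWithin,
          (hcont_vf.mono Ioi_subset_Ici_self).aestronglyMeasurable measurableSet_Ioi⟩
        ((hcont_vf 0 self_mem_Ici).mono Ioi_subset_Ici_self)
      rw [← h0]
      exact h
    · exact (integral_hasDerivAt_right (hii _ hcont_vf x hx)
        ⟨Ici 0, Ici_mem_nhds h0, hcont_vf.aestronglyMeasurable measurableSet_Ici⟩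
        ((hcont_vf x hx).continuousAt (Ici_mem_nhds h0))).hasDerivWithinAt
  refine ⟨fun x => (-κ * vvA κ x * A x + uuA' a κ x * (C - D x)) / W, ?_, ?_, ?_, ?_⟩
  · intro x hx
    have hφ : HasDerivWithinAt
        (fun x => (vvA κ x * A x + uuA a κ x * (C - D x)) / W)
        ((-κ * vvA κ x * A x + vvA κ x * (uuA a κ x * f x)
          + (uuA' a κ x * (C - D x) + uuA a κ x * (0 - vvA κ x * f x))) / W) (Ici 0) x :=
      ((((hasDerivAt_vvA κ x).hasDerivWithinAt.mul (hfA x hx)).add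
        (((hasDerivAt_uuA a κ x).hasDerivWithinAt.mul
          ((hasDerivWithinAt_const x (Ici 0) C).sub (hfD x hx))))).div_const W)
    have hφ' : HasDerivWithinAt
        (fun x => (vvA κ x * A x + uuA a κ x * (C - D x)) / W)
        ((-κ * vvA κ x * A x + uuA' a κ x * (C - D x)) / W) (Ici 0) x := by
      convert hφ using 1
      ring
    exact hφ'.congr (fun y hy => hψφ y hy) (hψφ x hx)
  · have hAcont : ContinuousOn A (Ici 0) := fun x hx => (hfA x hx).continuousWithinAt
    have hDcont : ContinuousOn D (Ici 0) := fun x hx => (hfD x hx).continuousWithinAt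
    exact (((((continuous_const.mul (continuous_vvA κ)).continuousOn).mul hAcont).add
      (((continuous_uuA' a κ).continuousOn).mul (continuousOn_const.sub hDcont)))).div_const W
  · have hA0 : A 0 = 0 := intervalIntegral.integral_same
    have hD0 : D 0 = 0 := intervalIntegral.integral_same
    have hu0 : uuA a κ 0 = κ * (a + 1) := by simp [uuA]
    have hu'0 : uuA' a κ 0 = κ * (Complex.I * (a - 1)) := by simp [uuA']
    have hv0 : vvA κ 0 = 1 := by simp [vvA]
    show (a - 1) * ψ 0
        + Complex.I * (a + 1) * ((-κ * vvA κ 0 * A 0 + uuA' a κ 0 * (C - D 0)) / W) = 0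
    rw [hψφ 0 le_rfl, hA0, hD0, hu0, hu'0, hv0]
    field_simp
    linear_combination (κ * (a - 1) * (a + 1) * C) * Complex.I_sq
  · intro x hx hfx
    have hcAt : ContinuousAt (fun y => uuA a κ y * f y) x :=
      ((continuous_uuA a κ).continuousAt).mul hfx
    have hcAt' : ContinuousAt (fun y => vvA κ y * f y) x :=
      ((continuous_vvA κ).continuousAt).mul hfx
    have hA' : HasDerivAt A (uuA a κ x * f x) x :=
      integral_hasDerivAt_right (hii _ hcont_uf x hx.le)
        ⟨Ici 0, Ici_mem_nhds hx, hcont_uf.aestronglyMeasurable measurableSet_Ici⟩ hcAt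
    have hD' : HasDerivAt D (vvA κ x * f x) x :=
      integral_hasDerivAt_right (hii _ hcont_vf x hx.le)
        ⟨Ici 0, Ici_mem_nhds hx, hcont_vf.aestronglyMeasurable measurableSet_Ici⟩ hcAt'
    have hraw : HasDerivAt
        (fun x => (-κ * vvA κ x * A x + uuA' a κ x * (C - D x)) / W)
        ((κ ^ 2 * vvA κ x * A x + (-κ * vvA κ x) * (uuA a κ x * f x)
          + (κ ^ 2 * uuA a κ x * (C - D x) + uuA' a κ x * (0 - vvA κ x * f x))) / W) x := by
      have h1 := (hasDerivAt_vvA' κ x).mul hA'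
      have h2 := (hasDerivAt_uuA' a κ x).mul ((hasDerivAt_const x C).sub hD')
      have := (h1.add h2).div_const W
      exact this.congr_deriv (by simp only [Pi.sub_apply])
    have key : (κ ^ 2 * vvA κ x * A x + (-κ * vvA κ x) * (uuA a κ x * f x)
          + (κ ^ 2 * uuA a κ x * (C - D x) + uuA' a κ x * (0 - vvA κ x * f x))) / W
        = κ ^ 2 * ψ x - f x := by
      rw [hψφ x hx.le]
      have hwr := wronskian_eq a κ x
      rw [← hW_def] at hwr
      field_simp
      linear_combination f x * hwr
    rw [← key]
    exact hraw
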